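/- Let H be a Hilbert space, D₊ and D₋ closed mutually orthogonal subspaces of H, P⁺ and P⁻ the orthogonal projections onto D₊^⊥ and D₋^⊥ respectively, and (U(t))_{t≥0} a semigroup of bounded operators on H with U(t)D₊ ⊆ D₊ and U(t)*D₋ ⊆ D₋ for all t ≥ 0. Define Z(t) = P⁺∘U(t)∘P⁻ and set K = D₊^⊥ ∩ D₋^⊥. Then Z(t) maps K into K, and the restriction of (Z(t))_{t≥0} to K is a semigroup: Z(t)∘Z(s)φ = Z(t+s)φ for all φ ∈ K and t, s ≥ 0. -/

import Mathlib

set_option synthInstance.maxHeartbeats 1000000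

theorem stmt_5 {H : Type*} [NormedAddCommGroup H] [InnerProductSpace ℝ H]
    [CompleteSpace H]
    (Dp Dm : Submodule ℝ H)
    (hDp : IsClosed (Dp : Set H)) (hDm : IsClosed (Dm : Set H))
    (horth : ∀ φ ∈ Dp, ∀ ψ ∈ Dm, (inner ℝ φ ψ : ℝ) = 0)
    (U : ℝ → H →L[ℝ] H)
    (hsg : ∀ t ≥ (0:ℝ), ∀ s ≥ (0:ℝ), U (t + s) = (U t).comp (U s))
    (hUp : ∀ t ≥ (0:ℝ), ∀ φ ∈ Dp, U t φ ∈ Dp)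
    (hUm : ∀ t ≥ (0:ℝ), ∀ φ ∈ Dm, ContinuousLinearMap.adjoint (U t) φ ∈ Dm)
    (Z : ℝ → H →L[ℝ] H)
    (hZ : ∀ t, Z t = (Dpᗮ.subtypeL.comp (Dpᗮ.orthogonalProjectionOnto)).comp
      ((U t).comp (Dmᗮ.subtypeL.comp (Dmᗮ.orthogonalProjectionOnto)))) :
    (∀ t ≥ (0:ℝ), ∀ φ ∈ Dpᗮ ⊓ Dmᗮ, Z t φ ∈ Dpᗮ ⊓ Dmᗮ) ∧
      (∀ t ≥ (0:ℝ), ∀ s ≥ (0:ℝ), ∀ φ ∈ Dpᗮ ⊓ Dmᗮ,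
        Z t (Z s φ) = Z (t + s) φ) := by
  haveI : CompleteSpace Dp := hDp.completeSpace_coe
  haveI : CompleteSpace Dm := hDm.completeSpace_coe
  -- notation
  have hZapp : ∀ t x, Z t x =
      (Dpᗮ.orthogonalProjectionOnto (U t ((Dmᗮ.orthogonalProjectionOnto x : H)) ) : H) := by
    intro t x
    rw [hZ t]
    rfl
  have hPmfix : ∀ x ∈ Dmᗮ, ((Dmᗮ.orthogonalProjectionOnto x : H)) = x := fun x hx =>
    Submodule.starProjection_eq_self_iff.mpr hx
  -- Z on K acts as P⁺ ∘ U t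
  have hZK : ∀ t, ∀ x ∈ Dmᗮ, Z t x = (Dpᗮ.orthogonalProjectionOnto (U t x) : H) := by
    intro t x hx
    rw [hZapp, hPmfix x hx]
  -- x - P⁺ x ∈ Dp
  have hsub : ∀ x : H, x - (Dpᗮ.orthogonalProjectionOnto x : H) ∈ Dp := by
    intro x
    have h := Submodule.sub_starProjection_mem_orthogonal (K := Dpᗮ) x
    rwa [Submodule.orthogonal_orthogonal] at h
  -- membership statement
  have hmem : ∀ t ≥ (0:ℝ), ∀ φ ∈ Dpᗮ ⊓ Dmᗮ, Z t φ ∈ Dpᗮ ⊓ Dmᗮ := by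
    intro t ht φ hφ
    obtain ⟨hφp, hφm⟩ := hφ
    rw [hZK t φ hφm]
    constructor
    · exact (Dpᗮ.orthogonalProjectionOnto (U t φ)).2
    · rw [SetLike.mem_coe, Submodule.mem_orthogonal]
      intro ψ hψ
      have hdecomp : (Dpᗮ.orthogonalProjectionOnto (U t φ) : H)
          = U t φ - (U t φ - (Dpᗮ.orthogonalProjectionOnto (U t φ) : H)) := (sub_sub_cancel _ _).symm
      rw [hdecomp, inner_sub_right]
      have h1 : (inner ℝ ψ (U t φ) : ℝ) = 0 := by
        rw [real_inner_comm]
        have := ContinuousLinearMap.adjoint_inner_right (U t) φ ψ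
        rw [← this, real_inner_comm]
        exact hφm _ (hUm t ht ψ hψ)
      have h2 : (inner ℝ ψ (U t φ - (Dpᗮ.orthogonalProjectionOnto (U t φ) : H)) : ℝ) = 0 := by
        rw [real_inner_comm]
        exact horth _ (hsub (U t φ)) _ hψ
      rw [h1, h2, sub_zero]
  refine ⟨hmem, ?_⟩
  intro t ht s hs φ hφ
  obtain ⟨hφp, hφm⟩ := hφ
  have hZs : Z s φ ∈ Dpᗮ ⊓ Dmᗮ := hmem s hs φ ⟨hφp, hφm⟩
  rw [hZK t _ hZs.2, hZK s φ hφm, hZK (t + s) φ hφm]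
  -- key: P⁺ (U t (P⁺ y)) = P⁺ (U t y)
  have key : ∀ y : H, (Dpᗮ.orthogonalProjectionOnto (U t ((Dpᗮ.orthogonalProjectionOnto y : H))) : H)
      = (Dpᗮ.orthogonalProjectionOnto (U t y) : H) := by
    intro y
    have hd : U t ((Dpᗮ.orthogonalProjectionOnto y : H))
        = U t y - U t (y - (Dpᗮ.orthogonalProjectionOnto y : H)) := by
      rw [map_sub, sub_sub_cancel]
    rw [hd, map_sub]
    have hz : Dpᗮ.orthogonalProjectionOnto (U t (y - (Dpᗮ.orthogonalProjectionOnto y : H))) = 0 := by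
      apply Submodule.orthogonalProjectionOnto_apply_of_mem_orthogonal
      exact Submodule.le_orthogonal_orthogonal Dp (hUp t ht _ (hsub y))
    rw [hz]
    simp
  rw [key (U s φ), hsg t ht s hs]
  rfl
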